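/- If κ is γ-reflecting and C¹, C² are γ-club in κ, then C¹ ∩ C² is γ-club in κ. Hence the γ-clubs on a γ-reflecting κ generate a filter. -/

import Mathlib

open Set

namespace GenStat

/-- `S` is unbounded in (below) `κ`. -/
def Unbdd (S : Set Ordinal) (κ : Ordinal) : Prop :=
  ∀ β < κ, ∃ α ∈ S, β ≤ α ∧ α < κ

/-- `Stat γ S κ` : `S` is `γ`-stationary in `κ`.  Defined by recursion on `γ`:
`S` is `0`-stationary iff unbounded; `S` is `γ`-stationary iff for every `η < γ`,
`κ` is `η`-reflecting and `S` meets every `η`-club of `κ`. -/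
def Stat (γ : Ordinal) (S : Set Ordinal) (κ : Ordinal) : Prop :=
  (γ = 0 → Unbdd S κ) ∧
  ∀ η < γ,
    (∀ A B : Set Ordinal, A ⊆ Set.Iio κ → B ⊆ Set.Iio κ →
        Stat η A κ → Stat η B κ →
        ∃ α < κ, Stat η (A ∩ Set.Iio α) α ∧ Stat η (B ∩ Set.Iio α) α)
    ∧ (∀ C : Set Ordinal, C ⊆ Set.Iio κ → Stat η C κ →
        (∀ α < κ, Stat η (C ∩ Set.Iio α) α → α ∈ C) →
        (S ∩ C).Nonempty)
termination_by γ

/-- `κ` is `γ`-reflecting: any two `γ`-stationary subsets of `κ` are simultaneously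
`γ`-stationary below some `α < κ`. -/
def Reflecting (γ κ : Ordinal) : Prop :=
  ∀ A B : Set Ordinal, A ⊆ Set.Iio κ → B ⊆ Set.Iio κ →
    Stat γ A κ → Stat γ B κ →
    ∃ α < κ, Stat γ (A ∩ Set.Iio α) α ∧ Stat γ (B ∩ Set.Iio α) α

/-- `C` is `γ`-club in `κ`: `γ`-stationary in `κ` and `γ`-stationary-closed below `κ`. -/
def IsClub (γ : Ordinal) (C : Set Ordinal) (κ : Ordinal) : Prop :=
  C ⊆ Set.Iio κ ∧ Stat γ C κ ∧ ∀ α < κ, Stat γ (C ∩ Set.Iio α) α → α ∈ C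

/-- `d_γ(A)` relative to `κ` : the set of `α < κ` below which `A` is `γ`-stationary. -/
def dSet (γ : Ordinal) (A : Set Ordinal) (κ : Ordinal) : Set Ordinal :=
  {α | α < κ ∧ Stat γ (A ∩ Set.Iio α) α}

theorem stat_iff (γ S κ) : Stat γ S κ ↔
    ((γ = 0 → Unbdd S κ) ∧
      ∀ η < γ, Reflecting η κ ∧
        (∀ C : Set Ordinal, C ⊆ Set.Iio κ → Stat η C κ →
          (∀ α < κ, Stat η (C ∩ Set.Iio α) α → α ∈ C) →
          (S ∩ C).Nonempty)) := by
  rw [Stat]; exact Iff.rfl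

theorem stat_mono {γ : Ordinal} {S T : Set Ordinal} {κ : Ordinal} (hST : S ⊆ T)
    (h : Stat γ S κ) : Stat γ T κ := by
  rw [stat_iff] at h ⊢
  refine ⟨fun h0 => ?_, fun η hη => ⟨(h.2 η hη).1, fun C c1 c2 c3 => ?_⟩⟩
  · intro β hβ
    obtain ⟨a, ha, hba, hak⟩ := h.1 h0 β hβ
    exact ⟨a, hST ha, hba, hak⟩
  · obtain ⟨x, hx1, hx2⟩ := (h.2 η hη).2 C c1 c2 c3
    exact ⟨x, hST hx1, hx2⟩

theorem stat_down {γ η : Ordinal} {S : Set Ordinal} {κ : Ordinal} (h0 : η ≠ 0)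
    (hlt : η < γ) (h : Stat γ S κ) : Stat η S κ := by
  rw [stat_iff] at h ⊢
  exact ⟨fun h' => absurd h' h0, fun δ hδ => h.2 δ (hδ.trans hlt)⟩

theorem zeroclub_subset {C : Set Ordinal} {κ : Ordinal}
    (hcl : ∀ α < κ, Stat 0 (C ∩ Set.Iio α) α → α ∈ C) :
    ∀ β < κ, β ∈ C := by
  intro β
  induction β using Ordinal.induction with
  | h β IHb =>
    intro hβ
    apply hcl β hβ
    rw [stat_iff]
    refine ⟨fun _ b hb => ⟨b, ⟨IHb b hb (hb.trans hβ), hb⟩, le_rfl, hb⟩,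
      fun η hη => absurd hη (not_lt_of_ge (zero_le (a := η)))⟩

universe u v

theorem key (γ : Ordinal.{u}) :
    (∀ (κ : Ordinal.{v}) (C₁ C₂ : Set Ordinal.{v}), Reflecting γ κ → IsClub γ C₁ κ → IsClub γ C₂ κ →
      IsClub γ (C₁ ∩ C₂) κ) ∧
    (∀ (η : Ordinal.{u}) (κ : Ordinal.{v}) (D E : Set Ordinal.{v}),
      η < γ → IsClub γ D κ → IsClub η E κ → IsClub γ (D ∩ E) κ) := by
  induction γ using Ordinal.induction with
  | h γ IH =>
  constructor
  · -- main statement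
    intro κ C₁ C₂ hrefl h₁ h₂
    obtain ⟨h₁sub, h₁st, h₁cl⟩ := h₁
    obtain ⟨h₂sub, h₂st, h₂cl⟩ := h₂
    refine ⟨fun x hx => h₁sub hx.1, ?_, ?_⟩
    · rw [stat_iff]
      constructor
      · rintro rfl
        intro β hβ
        exact ⟨β, ⟨zeroclub_subset h₁cl β hβ, zeroclub_subset h₂cl β hβ⟩, le_rfl, hβ⟩
      · intro η hη
        refine ⟨((stat_iff _ _ _ |>.mp h₁st).2 η hη).1, ?_⟩
        intro D hD1 hD2 hD3
        -- subclaim : for any γ-club C, C ∩ D is γ-stationary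
        have hsub : ∀ C : Set Ordinal, IsClub γ C κ → Stat γ (C ∩ D) κ := by
          intro C hC
          rw [stat_iff]
          refine ⟨fun h0 => absurd (h0 ▸ hη) (not_lt_of_ge (zero_le (a := η))), ?_⟩
          intro ζ hζ
          have hCst := (stat_iff _ _ _).mp hC.2.1
          refine ⟨(hCst.2 ζ hζ).1, ?_⟩
          intro F hF1 hF2 hF3
          rcases eq_or_ne η 0 with rfl | hη0
          · obtain ⟨x, xC, xF⟩ := (hCst.2 ζ hζ).2 F hF1 hF2 hF3
            exact ⟨x, ⟨xC, zeroclub_subset hD3 x (hC.1 xC)⟩, xF⟩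
          rcases eq_or_ne ζ 0 with rfl | hζ0
          · obtain ⟨x, xC, xD⟩ := (hCst.2 η hη).2 D hD1 hD2 hD3
            exact ⟨x, ⟨xC, xD⟩, zeroclub_subset hF3 x (hC.1 xC)⟩
          rcases lt_trichotomy ζ η with h | h | h
          · have hDF : IsClub η (D ∩ F) κ :=
              (IH η hη).2 ζ κ D F h ⟨hD1, hD2, hD3⟩ ⟨hF1, hF2, hF3⟩
            obtain ⟨x, xC, xDF⟩ := (hCst.2 η hη).2 (D ∩ F) hDF.1 hDF.2.1 hDF.2.2
            exact ⟨x, ⟨xC, xDF.1⟩, xDF.2⟩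
          · subst h
            have hDF : IsClub ζ (D ∩ F) κ :=
              (IH ζ hζ).1 κ D F ((hCst.2 ζ hζ).1) ⟨hD1, hD2, hD3⟩ ⟨hF1, hF2, hF3⟩
            obtain ⟨x, xC, xDF⟩ := (hCst.2 ζ hζ).2 (D ∩ F) hDF.1 hDF.2.1 hDF.2.2
            exact ⟨x, ⟨xC, xDF.1⟩, xDF.2⟩
          · have hFD : IsClub ζ (F ∩ D) κ :=
              (IH ζ hζ).2 η κ F D h ⟨hF1, hF2, hF3⟩ ⟨hD1, hD2, hD3⟩
            obtain ⟨x, xC, xFD⟩ := (hCst.2 ζ hζ).2 (F ∩ D) hFD.1 hFD.2.1 hFD.2.2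
            exact ⟨x, ⟨xC, xFD.2⟩, xFD.1⟩
        obtain ⟨α, hακ, hr1, hr2⟩ := hrefl (C₁ ∩ D) (C₂ ∩ D)
          (fun x hx => h₁sub hx.1) (fun x hx => h₂sub hx.1)
          (hsub C₁ ⟨h₁sub, h₁st, h₁cl⟩) (hsub C₂ ⟨h₂sub, h₂st, h₂cl⟩)
        have αC₁ : α ∈ C₁ := h₁cl α hακ (stat_mono (fun x hx => ⟨hx.1.1, hx.2⟩) hr1)
        have αC₂ : α ∈ C₂ := h₂cl α hακ (stat_mono (fun x hx => ⟨hx.1.1, hx.2⟩) hr2)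
        have αD : α ∈ D := by
          rcases eq_or_ne η 0 with rfl | hη0
          · exact zeroclub_subset hD3 α hακ
          · exact hD3 α hακ (stat_down hη0 hη
              (stat_mono (fun x hx => ⟨hx.1.2, hx.2⟩) hr1))
        exact ⟨α, ⟨αC₁, αC₂⟩, αD⟩
    · intro α hα hst
      exact ⟨h₁cl α hα (stat_mono (fun x hx => ⟨hx.1.1, hx.2⟩) hst),
        h₂cl α hα (stat_mono (fun x hx => ⟨hx.1.2, hx.2⟩) hst)⟩
  · -- auxiliary : γ-club ∩ η-club is γ-club
    intro η κ D E hη hD hE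
    obtain ⟨hDsub, hDst, hDcl⟩ := hD
    obtain ⟨hEsub, hEst, hEcl⟩ := hE
    have hDst' := (stat_iff _ _ _).mp hDst
    refine ⟨fun x hx => hDsub hx.1, ?_, ?_⟩
    · rw [stat_iff]
      refine ⟨fun h0 => absurd (h0 ▸ hη) (not_lt_of_ge (zero_le (a := η))), ?_⟩
      intro ζ hζ
      refine ⟨(hDst'.2 ζ hζ).1, ?_⟩
      intro F hF1 hF2 hF3
      rcases eq_or_ne η 0 with rfl | hη0
      · obtain ⟨x, xD, xF⟩ := (hDst'.2 ζ hζ).2 F hF1 hF2 hF3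
        exact ⟨x, ⟨xD, zeroclub_subset hEcl x (hDsub xD)⟩, xF⟩
      rcases eq_or_ne ζ 0 with rfl | hζ0
      · obtain ⟨x, xD, xE⟩ := (hDst'.2 η hη).2 E hEsub hEst hEcl
        exact ⟨x, ⟨xD, xE⟩, zeroclub_subset hF3 x (hDsub xD)⟩
      rcases lt_trichotomy ζ η with h | h | h
      · have hEF : IsClub η (E ∩ F) κ :=
          (IH η hη).2 ζ κ E F h ⟨hEsub, hEst, hEcl⟩ ⟨hF1, hF2, hF3⟩
        obtain ⟨x, xD, xEF⟩ := (hDst'.2 η hη).2 (E ∩ F) hEF.1 hEF.2.1 hEF.2.2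
        exact ⟨x, ⟨xD, xEF.1⟩, xEF.2⟩
      · subst h
        have hEF : IsClub ζ (E ∩ F) κ :=
          (IH ζ hζ).1 κ E F ((hDst'.2 ζ hζ).1) ⟨hEsub, hEst, hEcl⟩ ⟨hF1, hF2, hF3⟩
        obtain ⟨x, xD, xEF⟩ := (hDst'.2 ζ hζ).2 (E ∩ F) hEF.1 hEF.2.1 hEF.2.2
        exact ⟨x, ⟨xD, xEF.1⟩, xEF.2⟩
      · have hFE : IsClub ζ (F ∩ E) κ :=
          (IH ζ hζ).2 η κ F E h ⟨hF1, hF2, hF3⟩ ⟨hEsub, hEst, hEcl⟩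
        obtain ⟨x, xD, xFE⟩ := (hDst'.2 ζ hζ).2 (F ∩ E) hFE.1 hFE.2.1 hFE.2.2
        exact ⟨x, ⟨xD, xFE.2⟩, xFE.1⟩
    · intro α hα hst
      refine ⟨hDcl α hα (stat_mono (fun x hx => ⟨hx.1.1, hx.2⟩) hst), ?_⟩
      rcases eq_or_ne η 0 with rfl | hη0
      · exact zeroclub_subset hEcl α hα
      · exact hEcl α hα (stat_down hη0 hη
          (stat_mono (fun x hx => ⟨hx.1.2, hx.2⟩) hst))

/-- If `κ` is `γ`-reflecting and `C¹`, `C²` are `γ`-club in `κ`, then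
`C¹ ∩ C²` is `γ`-club in `κ`; hence the `γ`-clubs generate a filter on `κ`. -/
theorem club_inter_club (κ γ : Ordinal) (C₁ C₂ : Set Ordinal)
    (hrefl : Reflecting γ κ) (h₁ : IsClub γ C₁ κ) (h₂ : IsClub γ C₂ κ) :
    IsClub γ (C₁ ∩ C₂) κ :=
  (key γ).1 κ C₁ C₂ hrefl h₁ h₂

end GenStat
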